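/- Let 1 ≤ k ≤ n and let Φ be the conditional pigeon-hole encoding of y → (x_1 + ⋯ + x_n ≥ k), consisting of: for 1 ≤ i ≤ k the clause (¬y ∨ p_{i,1} ∨ ⋯ ∨ p_{i,n−k+1}); for 1 ≤ i ≤ k and 1 ≤ j ≤ n−k+1 the clause (x_{i+j−1} ∨ ¬p_{i,j}); and for 1 ≤ i < k and 1 ≤ j < n−k+1 the clause (¬p_{i+1,j} ∨ p_{i,1} ∨ ⋯ ∨ p_{i,j}). Then a complete assignment ν of truth values to y, x_1, …, x_n extends to an assignment of the variables p_{i,j} satisfying every clause of Φ if and only if ν(y) = true implies that at least k of ν(x_1), …, ν(x_n) are true. -/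

import Mathlib

abbrev Lit (V : Type) := V × Bool
abbrev Clause (V : Type) := Finset (Lit V)
abbrev CnfForm (V : Type) := Finset (Clause V)

variable {V : Type} [DecidableEq V]

/-- Restriction Φ|_ρ : remove clauses containing a literal of ρ, and delete from the
remaining clauses every literal whose complement is in ρ. -/
def restrict (Φ : CnfForm V) (ρ : Finset (Lit V)) : CnfForm V :=
  (Φ.filter fun c => ∀ l ∈ ρ, l ∉ c).image fun c => c.filter fun l => (l.1, !l.2) ∉ ρ

/-- Unit propagation derives the literal `l` from `Φ` : repeatedly assigning the
literals of unit clauses true and simplifying eventually produces the unit clause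
`{l}` or the empty clause. -/
inductive UPDerives : CnfForm V → Lit V → Prop
  | unit {Φ : CnfForm V} {l : Lit V} : ({l} : Clause V) ∈ Φ → UPDerives Φ l
  | bot {Φ : CnfForm V} {l : Lit V} : (∅ : Clause V) ∈ Φ → UPDerives Φ l
  | step {Φ : CnfForm V} {l : Lit V} (m : Lit V) : ({m} : Clause V) ∈ Φ →
      UPDerives (restrict Φ {m}) l → UPDerives Φ l

/-- Unit propagation derives the empty clause from `Φ`, i.e. `Φ* = ⊥`. -/
inductive UPEmpty : CnfForm V → Prop
  | bot {Φ : CnfForm V} : (∅ : Clause V) ∈ Φ → UPEmpty Φ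
  | step {Φ : CnfForm V} (m : Lit V) : ({m} : Clause V) ∈ Φ → UPEmpty (restrict Φ {m}) → UPEmpty Φ

/-- `UPReach Φ Ψ` : the formula `Ψ` is obtained from `Φ` by a sequence of
unit-propagation steps. -/
inductive UPReach : CnfForm V → CnfForm V → Prop
  | refl (Φ : CnfForm V) : UPReach Φ Φ
  | step {Φ Ψ : CnfForm V} (m : Lit V) : UPReach Φ Ψ → ({m} : Clause V) ∈ Ψ →
      UPReach Φ (restrict Ψ {m})

/-- The set of variables occurring in `Φ`. -/
def varsOf (Φ : CnfForm V) : Finset V := Φ.biUnion fun c => c.image Prod.fst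

/-- A Horn formula: every clause contains at most one positive literal. -/
def IsHorn (Φ : CnfForm V) : Prop := ∀ c ∈ Φ, (c.filter fun l => l.2 = true).card ≤ 1

/-- `Φ⁻` : the negative clauses of `Φ` (no positive literal). -/
def negClauses (Φ : CnfForm V) : CnfForm V := Φ.filter fun c => ∀ l ∈ c, l.2 = false

/-- `Φ⁺` : the clauses of `Φ` with exactly one positive literal. -/
def posPart (Φ : CnfForm V) : CnfForm V :=
  Φ.filter fun c => (c.filter fun l => l.2 = true).card = 1

/-- The conditional pigeon-hole encoding of `y → (x_1 + ⋯ + x_n ≥ k)`: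
for `1 ≤ i ≤ k` the clause `(¬y ∨ p_{i,1} ∨ ⋯ ∨ p_{i,n-k+1})`;
for `1 ≤ i ≤ k`, `1 ≤ j ≤ n-k+1` the clause `(x_{i+j-1} ∨ ¬p_{i,j})`;
for `1 ≤ i < k`, `1 ≤ j < n-k+1` the clause `(¬p_{i+1,j} ∨ p_{i,1} ∨ ⋯ ∨ p_{i,j})`. -/
def phpCond (n k : ℕ) (x : ℕ → V) (p : ℕ → ℕ → V) (y : V) : CnfForm V :=
  ((Finset.Icc 1 k).image fun i =>
      insert ((y, false) : Lit V)
        ((Finset.Icc 1 (n - k + 1)).image fun j => ((p i j, true) : Lit V)))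
  ∪ ((Finset.Icc 1 k ×ˢ Finset.Icc 1 (n - k + 1)).image fun q =>
      ({(x (q.1 + q.2 - 1), true), (p q.1 q.2, false)} : Clause V))
  ∪ ((Finset.Icc 1 (k - 1) ×ˢ Finset.Icc 1 (n - k)).image fun q =>
      insert ((p (q.1 + 1) q.2, false) : Lit V)
        ((Finset.Icc 1 q.2).image fun l => ((p q.1 l, true) : Lit V)))

/-- A complete assignment `ν` of the variables `y, x_1, …, x_n`
extends to an assignment of the variables `p_{i,j}` satisfying every clause of the
conditional pigeon-hole encoding iff `ν y = true` implies that at least `k` of the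
`ν (x i)` are true. -/
lemma fin_gap {m : ℕ} (g : Fin m → ℕ) (hg : StrictMono g) :
    ∀ d : ℕ, ∀ i j : Fin m, (j : ℕ) = (i : ℕ) + d → g i + d ≤ g j := by
  intro d
  induction d with
  | zero =>
    intro i j h
    have : i = j := Fin.ext (by omega)
    subst this; omega
  | succ d ih =>
    intro i j h
    have hj' : (i : ℕ) + d < m := by have := j.isLt; omega
    have h1 := ih i ⟨(i : ℕ) + d, hj'⟩ rfl
    have h2 : g ⟨(i : ℕ) + d, hj'⟩ < g j := hg (by simp [Fin.lt_def]; omega)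
    omega

lemma mono_of_step (f : ℕ → ℕ) (k : ℕ) (h : ∀ i, 1 ≤ i → i + 1 ≤ k → f i ≤ f (i + 1)) :
    ∀ i i', 1 ≤ i → i ≤ i' → i' ≤ k → f i ≤ f i' := by
  intro i i'
  induction i' with
  | zero => intro h1 h2 h3; omega
  | succ m ih =>
    intro h1 h2 h3
    rcases Nat.lt_or_ge m i with hge | hlt
    · have : i = m + 1 := by omega
      subst this; exact le_refl _
    · exact le_trans (ih h1 hlt (by omega)) (h m (by omega) h3)

theorem stmt11 {V : Type} [DecidableEq V] (n k : ℕ) (hk : 1 ≤ k) (hkn : k ≤ n)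
    (x : ℕ → V) (p : ℕ → ℕ → V) (y : V)
    (hx : ∀ i ∈ Finset.Icc 1 n, ∀ j ∈ Finset.Icc 1 n, x i = x j → i = j)
    (hpinj : ∀ i ∈ Finset.Icc 1 k, ∀ j ∈ Finset.Icc 1 (n - k + 1),
      ∀ i' ∈ Finset.Icc 1 k, ∀ j' ∈ Finset.Icc 1 (n - k + 1),
        p i j = p i' j' → i = i' ∧ j = j')
    (hxp : ∀ l ∈ Finset.Icc 1 n, ∀ i ∈ Finset.Icc 1 k, ∀ j ∈ Finset.Icc 1 (n - k + 1),
      x l ≠ p i j)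
    (hxy : ∀ i ∈ Finset.Icc 1 n, x i ≠ y)
    (hpy : ∀ i ∈ Finset.Icc 1 k, ∀ j ∈ Finset.Icc 1 (n - k + 1), p i j ≠ y)
    (ν : V → Bool) :
    (∃ μ : V → Bool, μ y = ν y ∧ (∀ i ∈ Finset.Icc 1 n, μ (x i) = ν (x i)) ∧
        ∀ c ∈ phpCond n k x p y, ∃ l ∈ c, μ l.1 = l.2) ↔
      (ν y = true → k ≤ ((Finset.Icc 1 n).filter fun i => ν (x i) = true).card) := by
  constructor
  · rintro ⟨μ, hμy, hμx, hsat⟩ hy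
    set S : Finset ℕ := (Finset.Icc 1 n).filter (fun i => ν (x i) = true) with hS
    set T : ℕ → Finset ℕ :=
      fun i => (Finset.Icc 1 (n - k + 1)).filter (fun j => μ (p i j) = true) with hT
    have hTne : ∀ i ∈ Finset.Icc 1 k, (T i).Nonempty := by
      intro i hi
      have hc1 : (insert ((y, false) : Lit V)
          ((Finset.Icc 1 (n - k + 1)).image fun j => ((p i j, true) : Lit V)))
            ∈ phpCond n k x p y := by
        apply Finset.mem_union_left
        apply Finset.mem_union_left
        exact Finset.mem_image_of_mem _ hi
      obtain ⟨l, hl, hμl⟩ := hsat _ hc1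
      rcases Finset.mem_insert.mp hl with rfl | hl'
      · simp only at hμl
        rw [hμy, hy] at hμl; exact absurd hμl (by simp)
      · obtain ⟨j, hj, rfl⟩ := Finset.mem_image.mp hl'
        exact ⟨j, Finset.mem_filter.mpr ⟨hj, hμl⟩⟩
    set J : ℕ → ℕ := fun i => if h : (T i).Nonempty then (T i).min' h else 0 with hJ
    have hJmem : ∀ i ∈ Finset.Icc 1 k, J i ∈ T i := by
      intro i hi
      simp only [hJ, dif_pos (hTne i hi)]
      exact (T i).min'_mem _
    have hJle : ∀ i ∈ Finset.Icc 1 k, ∀ j ∈ T i, J i ≤ j := by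
      intro i hi j hj
      simp only [hJ, dif_pos (hTne i hi)]
      exact (T i).min'_le _ hj
    have hJprop : ∀ i ∈ Finset.Icc 1 k,
        J i ∈ Finset.Icc 1 (n - k + 1) ∧ μ (p i (J i)) = true := by
      intro i hi; exact Finset.mem_filter.mp (hJmem i hi)
    have hstep : ∀ i, 1 ≤ i → i + 1 ≤ k → J i ≤ J (i + 1) := by
      intro i h1 h2
      have hi1 : i + 1 ∈ Finset.Icc 1 k := by simp; omega
      obtain ⟨hJicc1, hJtrue1⟩ := hJprop (i + 1) hi1
      have hiIcc : i ∈ Finset.Icc 1 k := by simp; omega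
      obtain ⟨hJicc0, _⟩ := hJprop i hiIcc
      simp only [Finset.mem_Icc] at hJicc1 hJicc0
      rcases Nat.lt_or_ge (J (i + 1)) (n - k + 1) with hlt | hge
      · have hc3 : (insert ((p (i + 1) (J (i + 1)), false) : Lit V)
            ((Finset.Icc 1 (J (i + 1))).image fun l => ((p i l, true) : Lit V)))
              ∈ phpCond n k x p y := by
          apply Finset.mem_union_right
          exact Finset.mem_image.mpr ⟨(i, J (i + 1)),
            Finset.mem_product.mpr ⟨by simp; omega, by simp; omega⟩, rfl⟩
        obtain ⟨l, hl, hμl⟩ := hsat _ hc3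
        rcases Finset.mem_insert.mp hl with rfl | hl'
        · simp [hJtrue1] at hμl
        · obtain ⟨l', hl2, rfl⟩ := Finset.mem_image.mp hl'
          rw [Finset.mem_Icc] at hl2
          have hl'T : l' ∈ T i := Finset.mem_filter.mpr ⟨Finset.mem_Icc.mpr (by omega), hμl⟩
          exact le_trans (hJle i hiIcc l' hl'T) hl2.2
      · omega
    have hmono := mono_of_step J k hstep
    set b : ℕ → ℕ := fun i => i + J i - 1 with hb
    have hbS : ∀ i ∈ Finset.Icc 1 k, b i ∈ S := by
      intro i hi
      obtain ⟨hJicc, hJtrue⟩ := hJprop i hi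
      simp only [Finset.mem_Icc] at hJicc hi
      have hc2 : ({((x (i + J i - 1), true) : Lit V), (p i (J i), false)} : Clause V)
          ∈ phpCond n k x p y := by
        apply Finset.mem_union_left
        apply Finset.mem_union_right
        exact Finset.mem_image.mpr ⟨(i, J i),
          Finset.mem_product.mpr ⟨by simp; omega, by simp; omega⟩, rfl⟩
      obtain ⟨l, hl, hμl⟩ := hsat _ hc2
      have hbIcc : b i ∈ Finset.Icc 1 n := by simp [hb]; omega
      rcases Finset.mem_insert.mp hl with rfl | hl'
      · simp only at hμl
        refine Finset.mem_filter.mpr ⟨hbIcc, ?_⟩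
        rw [← hμx _ hbIcc]; exact hμl
      · rw [Finset.mem_singleton] at hl'
        subst hl'
        simp only at hμl; rw [hJtrue] at hμl; exact absurd hμl (by simp)
    have hblt : ∀ i ∈ Finset.Icc 1 k, ∀ i' ∈ Finset.Icc 1 k, i < i' → b i < b i' := by
      intro i hi i' hi' hlt
      simp only [Finset.mem_Icc] at hi hi'
      have h1 := hmono i i' hi.1 (le_of_lt hlt) hi'.2
      have h2 := (hJprop i (by simp; omega)).1
      simp only [Finset.mem_Icc] at h2
      simp only [hb]; omega
    have hinj : Set.InjOn b (Finset.Icc 1 k) := by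
      intro i hi i' hi' heq
      rcases lt_trichotomy i i' with h | h | h
      · exact absurd heq (Nat.ne_of_lt (hblt i hi i' hi' h))
      · exact h
      · exact absurd heq.symm (Nat.ne_of_lt (hblt i' hi' i hi h))
    calc k = (Finset.Icc 1 k).card := by simp
      _ ≤ S.card := Finset.card_le_card_of_injOn b hbS hinj
  · intro hcard
    set Pall : Finset V :=
      (Finset.Icc 1 k ×ˢ Finset.Icc 1 (n - k + 1)).image (fun q => p q.1 q.2) with hPall
    by_cases hy : ν y = true
    · -- need at least k true x's; build a witness placement
      have hSk := hcard hy
      set S : Finset ℕ := (Finset.Icc 1 n).filter (fun i => ν (x i) = true) with hS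
      set g := S.orderEmbOfFin rfl with hg
      have hgS : ∀ t : Fin S.card, g t ∈ S := fun t => S.orderEmbOfFin_mem rfl t
      have hgIcc : ∀ t : Fin S.card, 1 ≤ g t ∧ g t ≤ n := by
        intro t
        have h2 : g t ∈ Finset.filter (fun i => ν (x i) = true) (Finset.Icc 1 n) := hgS t
        have h3 := (Finset.mem_filter.mp h2).1
        rw [Finset.mem_Icc] at h3
        exact h3
      set a : ℕ → ℕ := fun i => if h : i - 1 < S.card then g ⟨i - 1, h⟩ else 0 with ha
      have haval : ∀ i ∈ Finset.Icc 1 k, ∃ h : i - 1 < S.card, a i = g ⟨i - 1, h⟩ := by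
        intro i hi
        simp only [Finset.mem_Icc] at hi
        have h : i - 1 < S.card := by omega
        exact ⟨h, by simp [ha, dif_pos h]⟩
      have haS : ∀ i ∈ Finset.Icc 1 k, a i ∈ S := by
        intro i hi
        obtain ⟨h, heq⟩ := haval i hi
        rw [heq]; exact hgS _
      have ha_ge : ∀ i ∈ Finset.Icc 1 k, i ≤ a i := by
        intro i hi
        obtain ⟨h, heq⟩ := haval i hi
        simp only [Finset.mem_Icc] at hi
        have h0 : (0 : ℕ) < S.card := by omega
        have := fin_gap g g.strictMono (i - 1) ⟨0, h0⟩ ⟨i - 1, h⟩ (by simp)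
        have h1 := (hgIcc ⟨0, h0⟩).1
        omega
      have ha_le : ∀ i ∈ Finset.Icc 1 k, a i + (k - i) ≤ n := by
        intro i hi
        obtain ⟨h, heq⟩ := haval i hi
        simp only [Finset.mem_Icc] at hi
        have hlast : S.card - 1 < S.card := by omega
        have := fin_gap g g.strictMono (S.card - 1 - (i - 1)) ⟨i - 1, h⟩
          ⟨S.card - 1, hlast⟩ (by simp; omega)
        have h2 := (hgIcc ⟨S.card - 1, hlast⟩).2
        omega
      have haJ : ∀ i ∈ Finset.Icc 1 k, a i - i + 1 ∈ Finset.Icc 1 (n - k + 1) := by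
        intro i hi
        have h1 := ha_ge i hi
        have h2 := ha_le i hi
        simp only [Finset.mem_Icc] at hi ⊢
        omega
      have hamono : ∀ i ∈ Finset.Icc 1 k, ∀ i' ∈ Finset.Icc 1 k, i < i' → a i < a i' := by
        intro i hi i' hi' hlt
        obtain ⟨h, heq⟩ := haval i hi
        obtain ⟨h', heq'⟩ := haval i' hi'
        simp only [Finset.mem_Icc] at hi hi'
        rw [heq, heq']
        exact g.strictMono (by simp [Fin.lt_def]; omega)
      set Ptrue : Finset V := (Finset.Icc 1 k).image (fun i => p i (a i - i + 1)) with hPtrue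
      set μ : V → Bool :=
        fun v => if v ∈ Ptrue then true else if v ∈ Pall then false else ν v with hμ
      have hμp : ∀ i ∈ Finset.Icc 1 k, μ (p i (a i - i + 1)) = true := by
        intro i hi
        simp only [hμ, if_pos (show p i (a i - i + 1) ∈ Ptrue from Finset.mem_image_of_mem _ hi)]
      have hnotP : ∀ v : V, v ∉ Ptrue → v ∉ Pall → μ v = ν v := by
        intro v h1 h2
        simp only [hμ, if_neg h1, if_neg h2]
      refine ⟨μ, ?_, ?_, ?_⟩
      · apply hnotP
        · intro hmem
          obtain ⟨i, hi, heq⟩ := Finset.mem_image.mp hmem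
          exact hpy i hi _ (haJ i hi) heq
        · intro hmem
          obtain ⟨⟨i, j⟩, hq, heq⟩ := Finset.mem_image.mp hmem
          obtain ⟨h1, h2⟩ := Finset.mem_product.mp hq
          exact hpy i h1 j h2 heq
      · intro l hl
        apply hnotP
        · intro hmem
          obtain ⟨i, hi, heq⟩ := Finset.mem_image.mp hmem
          exact hxp l hl i hi _ (haJ i hi) heq.symm
        · intro hmem
          obtain ⟨⟨i, j⟩, hq, heq⟩ := Finset.mem_image.mp hmem
          obtain ⟨h1, h2⟩ := Finset.mem_product.mp hq
          exact hxp l hl i h1 j h2 heq.symm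
      · intro c hc
        rcases Finset.mem_union.mp hc with hc' | hc3
        · rcases Finset.mem_union.mp hc' with hc1 | hc2
          · obtain ⟨i, hi, rfl⟩ := Finset.mem_image.mp hc1
            refine ⟨(p i (a i - i + 1), true), ?_, hμp i hi⟩
            exact Finset.mem_insert_of_mem (Finset.mem_image_of_mem _ (haJ i hi))
          · obtain ⟨⟨i, j⟩, hq, rfl⟩ := Finset.mem_image.mp hc2
            obtain ⟨hi, hj⟩ := Finset.mem_product.mp hq
            by_cases hptrue : p i j ∈ Ptrue
            · obtain ⟨i', hi', heq⟩ := Finset.mem_image.mp hptrue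
              obtain ⟨rfl, hj'⟩ := hpinj i' hi' _ (haJ i' hi') i hi j hj heq
              have hge := ha_ge i' hi'
              have hIcc : a i' ∈ Finset.Icc 1 n := by
                have h2 : a i' ∈ Finset.filter (fun i => ν (x i) = true) (Finset.Icc 1 n) :=
                  haS i' hi'
                exact (Finset.mem_filter.mp h2).1
              have hxval : i' + j - 1 = a i' := by omega
              refine ⟨(x (i' + j - 1), true), Finset.mem_insert_self _ _, ?_⟩
              simp only
              rw [hxval]
              have hμx' : μ (x (a i')) = ν (x (a i')) := by
                apply hnotP
                · intro hmem
                  obtain ⟨i'', hi'', heq''⟩ := Finset.mem_image.mp hmem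
                  exact hxp _ hIcc i'' hi'' _ (haJ i'' hi'') heq''.symm
                · intro hmem
                  obtain ⟨⟨i'', j''⟩, hq'', heq''⟩ := Finset.mem_image.mp hmem
                  obtain ⟨h1'', h2''⟩ := Finset.mem_product.mp hq''
                  exact hxp _ hIcc i'' h1'' j'' h2'' heq''.symm
              rw [hμx']
              have h2 : a i' ∈ Finset.filter (fun i => ν (x i) = true) (Finset.Icc 1 n) :=
                haS i' hi'
              exact (Finset.mem_filter.mp h2).2
            · refine ⟨(p i j, false), ?_, ?_⟩
              · exact Finset.mem_insert_of_mem (Finset.mem_singleton_self _)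
              · simp only [hμ, if_neg hptrue]
                rw [if_pos]
                exact Finset.mem_image.mpr ⟨(i, j), Finset.mem_product.mpr ⟨hi, hj⟩, rfl⟩
        · obtain ⟨⟨i, j⟩, hq, rfl⟩ := Finset.mem_image.mp hc3
          obtain ⟨hi, hj⟩ := Finset.mem_product.mp hq
          simp only [Finset.mem_Icc] at hi hj
          have hi1 : i + 1 ∈ Finset.Icc 1 k := by simp; omega
          have hiIcc : i ∈ Finset.Icc 1 k := by simp; omega
          have hjIcc : j ∈ Finset.Icc 1 (n - k + 1) := by simp; omega
          by_cases hptrue : p (i + 1) j ∈ Ptrue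
          · obtain ⟨i', hi', heq⟩ := Finset.mem_image.mp hptrue
            obtain ⟨hie, hje⟩ := hpinj i' hi' _ (haJ i' hi') (i + 1) hi1 j hjIcc heq
            subst hie
            have hlt := hamono i hiIcc (i + 1) hi1 (by omega)
            have hge := ha_ge i hiIcc
            have hge1 := ha_ge (i + 1) hi1
            refine ⟨(p i (a i - i + 1), true), ?_, hμp i hiIcc⟩
            apply Finset.mem_insert_of_mem
            apply Finset.mem_image_of_mem
            simp only [Finset.mem_Icc]
            omega
          · refine ⟨(p (i + 1) j, false), Finset.mem_insert_self _ _, ?_⟩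
            simp only [hμ, if_neg hptrue]
            rw [if_pos]
            exact Finset.mem_image.mpr ⟨(i + 1, j), Finset.mem_product.mpr ⟨hi1, hjIcc⟩, rfl⟩
    · -- ν y = false : set all p's false
      set μ : V → Bool := fun v => if v ∈ Pall then false else ν v with hμ
      have hyf : ν y = false := by
        cases h : ν y
        · rfl
        · exact absurd h hy
      have hnotP : ∀ v : V, v ∉ Pall → μ v = ν v := by
        intro v h2
        simp only [hμ, if_neg h2]
      have hPfalse : ∀ i ∈ Finset.Icc 1 k, ∀ j ∈ Finset.Icc 1 (n - k + 1),
          μ (p i j) = false := by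
        intro i hi j hj
        simp only [hμ]
        rw [if_pos]
        exact Finset.mem_image.mpr ⟨(i, j), Finset.mem_product.mpr ⟨hi, hj⟩, rfl⟩
      have hμy : μ y = ν y := by
        apply hnotP
        intro hmem
        obtain ⟨⟨i, j⟩, hq, heq⟩ := Finset.mem_image.mp hmem
        obtain ⟨h1, h2⟩ := Finset.mem_product.mp hq
        exact hpy i h1 j h2 heq
      refine ⟨μ, hμy, ?_, ?_⟩
      · intro l hl
        apply hnotP
        intro hmem
        obtain ⟨⟨i, j⟩, hq, heq⟩ := Finset.mem_image.mp hmem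
        obtain ⟨h1, h2⟩ := Finset.mem_product.mp hq
        exact hxp l hl i h1 j h2 heq.symm
      · intro c hc
        rcases Finset.mem_union.mp hc with hc' | hc3
        · rcases Finset.mem_union.mp hc' with hc1 | hc2
          · obtain ⟨i, hi, rfl⟩ := Finset.mem_image.mp hc1
            exact ⟨(y, false), Finset.mem_insert_self _ _, by simp only; rw [hμy, hyf]⟩
          · obtain ⟨⟨i, j⟩, hq, rfl⟩ := Finset.mem_image.mp hc2
            obtain ⟨hi, hj⟩ := Finset.mem_product.mp hq
            exact ⟨(p i j, false),
              Finset.mem_insert_of_mem (Finset.mem_singleton_self _), hPfalse i hi j hj⟩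
        · obtain ⟨⟨i, j⟩, hq, rfl⟩ := Finset.mem_image.mp hc3
          obtain ⟨hi, hj⟩ := Finset.mem_product.mp hq
          simp only [Finset.mem_Icc] at hi hj
          exact ⟨(p (i + 1) j, false), Finset.mem_insert_self _ _,
            hPfalse (i + 1) (by simp; omega) j (by simp; omega)⟩
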